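/- Let (V, ω) be a 2m-dimensional symplectic vector space and A : V → V an ω-symmetric endomorphism. Let u ∈ V and suppose the vectors u, Au, …, A^{m-1}u are linearly independent. Then W = span{u, Au, …, A^{m-1}u} is a Lagrangian subspace of (V, ω), i.e. W equals its ω-orthogonal complement. -/

import Mathlib

/-- If `A` is symmetric with respect to a symplectic form `ω` on a
`2m`-dimensional real vector space and the vectors `u, Au, …, A^{m-1}u` are
linearly independent, then they span a Lagrangian subspace: the span equals its
`ω`-orthogonal complement. -/
theorem krylov_lagrangian {V : Type*} [AddCommGroup V] [Module ℝ V]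
    [FiniteDimensional ℝ V] (m : ℕ)
    (hdim : Module.finrank ℝ V = 2 * m)
    (ω : LinearMap.BilinForm ℝ V) (halt : ∀ v, ω v v = 0)
    (hnd : ω.Nondegenerate)
    (A : V →ₗ[ℝ] V) (hsym : ∀ v w, ω (A v) w = ω v (A w)) (u : V)
    (hind : LinearIndependent ℝ (fun k : Fin m => (A ^ (k : ℕ)) u)) :
    Submodule.span ℝ (Set.range fun k : Fin m => (A ^ (k : ℕ)) u)
      = ω.orthogonal (Submodule.span ℝ (Set.range fun k : Fin m => (A ^ (k : ℕ)) u)) := by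
  have hAlt : ω.IsAlt := halt
  have hrefl : ω.IsRefl := hAlt.isRefl
  set W := Submodule.span ℝ (Set.range fun k : Fin m => (A ^ (k : ℕ)) u) with hW
  -- powers of A are also ω-symmetric
  have hsymn : ∀ (n : ℕ) (v w : V), ω ((A ^ n) v) w = ω v ((A ^ n) w) := by
    intro n
    induction n with
    | zero => simp
    | succ k ih =>
      intro v w
      rw [pow_succ, Module.End.mul_apply, Module.End.mul_apply, ih, hsym]
      congr 1
      rw [← Module.End.mul_apply, ← Module.End.mul_apply, ← pow_succ, ← pow_succ']
  -- the Krylov space is isotropic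
  have hiso : ∀ i j : ℕ, ω ((A ^ i) u) ((A ^ j) u) = 0 := by
    intro i j
    have h1 : ω ((A ^ i) u) ((A ^ j) u) = ω u ((A ^ (i + j)) u) := by
      rw [hsymn i, ← Module.End.mul_apply, ← pow_add]
    have h2 : ω ((A ^ j) u) ((A ^ i) u) = ω u ((A ^ (i + j)) u) := by
      rw [hsymn j, ← Module.End.mul_apply, ← pow_add, add_comm i j]
    have h3 := hAlt.neg_eq ((A ^ i) u) ((A ^ j) u)
    linarith
  -- hence W ≤ W^⊥
  have hle : W ≤ ω.orthogonal W := by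
    intro x hx
    rw [LinearMap.BilinForm.mem_orthogonal_iff]
    intro y hy
    induction hy using Submodule.span_induction with
    | mem z hz =>
      obtain ⟨j, rfl⟩ := hz
      induction hx using Submodule.span_induction with
      | mem x' hx' =>
        obtain ⟨i, rfl⟩ := hx'
        exact hiso j i
      | zero => simp
      | add a b _ _ ha hb => simp [ha, hb]
      | smul c a _ ha => simp [ha]
    | zero => simp
    | add a b _ _ ha hb => simp [ha, hb]
    | smul c a _ ha => simp [ha]
  -- dimension count
  have hfr : Module.finrank ℝ W = m := by
    rw [hW, finrank_span_eq_card hind]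
    simp
  have hfr' : Module.finrank ℝ (ω.orthogonal W) = m := by
    rw [LinearMap.BilinForm.finrank_orthogonal hnd, hdim, hfr]
    omega
  exact Submodule.eq_of_le_of_finrank_le hle (by rw [hfr, hfr'])
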